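/- For ψ strictly between ω and π, the quantity −(1 + cos ψ)/(2·cos(ψ/4) − 1 + cos ψ) is strictly positive, where ω = 4·arccos((2/√3)·cos((1/3)·arccos(−3√3/8))). -/

import Mathlib

set_option maxHeartbeats 1000000


/-- For ψ strictly between ω = 4·arccos((2/√3)·cos((1/3)·arccos(−3√3/8))) and π,
the spherical square radius −(1 + cos ψ)/(2·cos(ψ/4) − 1 + cos ψ) is strictly positive. -/
theorem stmt11 (ψ : ℝ)
    (hψ : ψ ∈ Set.Ioo
      (4 * Real.arccos ((2 / Real.sqrt 3) *
        Real.cos ((1 / 3) * Real.arccos (-3 * Real.sqrt 3 / 8))))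
      Real.pi) :
    0 < -(1 + Real.cos ψ) / (2 * Real.cos (ψ / 4) - 1 + Real.cos ψ) := by
  obtain ⟨hlo, hhi⟩ := hψ
  set s := Real.sqrt 3 with hs_def
  have hs2 : s ^ 2 = 3 := Real.sq_sqrt (by norm_num)
  have hspos : 0 < s := Real.sqrt_pos.mpr (by norm_num)
  have hslt2 : s < 2 := by nlinarith
  set u := Real.cos ((1 / 3) * Real.arccos (-3 * s / 8)) with hu_def
  set c := (2 / s) * u with hc_def
  -- a = -3√3/8 is in [-1, 1]
  have ha1 : (-1 : ℝ) ≤ -3 * s / 8 := by nlinarith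
  have ha2 : -3 * s / 8 ≤ 1 := by nlinarith
  have harc := Real.cos_arccos ha1 ha2
  -- triple angle: 4u³ - 3u = -3s/8
  have htriple : 4 * u ^ 3 - 3 * u = -3 * s / 8 := by
    have h3 := Real.cos_three_mul ((1 / 3) * Real.arccos (-3 * s / 8))
    rw [show (3 : ℝ) * ((1 / 3) * Real.arccos (-3 * s / 8))
        = Real.arccos (-3 * s / 8) by ring, harc] at h3
    linarith [h3]
  -- c is a root of 4t³ - 4t + 1
  have hgc : 4 * c ^ 3 - 4 * c + 1 = 0 := by
    rw [hc_def]
    have hsne : s ≠ 0 := ne_of_gt hspos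
    field_simp
    linear_combination 8 * htriple + (s - 8 * u) * hs2
  -- bounds on the angle φ = (1/3)·arccos(a): it lies in [π/6, π/3]
  have harc_ge : Real.pi / 2 ≤ Real.arccos (-3 * s / 8) := by
    by_contra h
    push_neg at h
    have hpos := Real.cos_pos_of_mem_Ioo
      (x := Real.arccos (-3 * s / 8))
      ⟨by linarith [Real.arccos_nonneg (-3 * s / 8), Real.pi_pos], h⟩
    rw [harc] at hpos
    nlinarith
  have harc_le : Real.arccos (-3 * s / 8) ≤ Real.pi := Real.arccos_le_pi _
  have hφ_ge : Real.pi / 6 ≤ (1 / 3) * Real.arccos (-3 * s / 8) := by linarith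
  have hφ_le : (1 / 3) * Real.arccos (-3 * s / 8) ≤ Real.pi / 3 := by linarith
  have hpi_pos := Real.pi_pos
  -- u ≤ cos(π/6) = √3/2
  have hu_le : u ≤ s / 2 := by
    have := Real.cos_le_cos_of_nonneg_of_le_pi (by positivity)
      (by linarith) hφ_ge
    rwa [Real.cos_pi_div_six] at this
  have hu_ge : 0 ≤ u := by
    have := Real.cos_nonneg_of_mem_Icc (x := (1 / 3) * Real.arccos (-3 * s / 8))
      ⟨by linarith, by linarith⟩
    exact this
  have hc_le : c ≤ 1 := by
    rw [hc_def]
    rw [div_mul_eq_mul_div, div_le_one hspos]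
    nlinarith
  have hc_ge : 0 ≤ c := by positivity
  have harccos_c := Real.cos_arccos (by linarith : (-1 : ℝ) ≤ c) hc_le
  have harccos_c_nonneg := Real.arccos_nonneg c
  set x := Real.cos (ψ / 4) with hx_def
  have hψpos : 0 < ψ := lt_of_le_of_lt (by nlinarith [harccos_c_nonneg]) hlo
  -- x < c since ψ/4 > arccos c
  have hx_lt_c : x < c := by
    have h := Real.cos_lt_cos_of_nonneg_of_le_pi (x := Real.arccos c) (y := ψ / 4)
      harccos_c_nonneg (by linarith) (by linarith)
    rwa [harccos_c] at h
  -- x > √2/2 since ψ/4 < π/4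
  have hx_gt : Real.sqrt 2 / 2 < x := by
    have h := Real.cos_lt_cos_of_nonneg_of_le_pi (x := ψ / 4) (y := Real.pi / 4)
      (by linarith) (by linarith) (by linarith)
    rwa [Real.cos_pi_div_four] at h
  have h2 : (Real.sqrt 2) ^ 2 = 2 := Real.sq_sqrt (by norm_num)
  have hsqrt2pos : 0 < Real.sqrt 2 := Real.sqrt_pos.mpr (by norm_num)
  have hx2 : 1 / 2 < x ^ 2 := by nlinarith
  have hxpos : 0 < x := lt_trans (by positivity) hx_gt
  -- cos ψ in terms of x
  have hcos_half : Real.cos (ψ / 2) = 2 * x ^ 2 - 1 := by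
    rw [show ψ / 2 = 2 * (ψ / 4) by ring, Real.cos_two_mul]
  have hcosψ : Real.cos ψ = 2 * (2 * x ^ 2 - 1) ^ 2 - 1 := by
    rw [show ψ = 2 * (ψ / 2) by ring, Real.cos_two_mul, hcos_half]
  -- numerator is negative
  have h2x : 0 < 2 * x ^ 2 - 1 := by linarith
  have hnum : -(1 + Real.cos ψ) < 0 := by
    rw [hcosψ]; nlinarith [mul_pos h2x h2x]
  -- denominator is negative: 2x(4x³-4x+1) with 4x³-4x+1 < 0
  have hgx : 4 * x ^ 3 - 4 * x + 1 < 0 := by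
    nlinarith [mul_pos hxpos hxpos, mul_pos (mul_pos hxpos hxpos) hxpos,
      sq_nonneg (x + c), sq_nonneg (x - c)]
  have hden : 2 * Real.cos (ψ / 4) - 1 + Real.cos ψ < 0 := by
    rw [hcosψ, ← hx_def]
    nlinarith [mul_pos hxpos (neg_pos.mpr hgx)]
  exact div_pos_of_neg_of_neg hnum hden
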